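/- arXiv:2410.09303 — 2 statements merged into one kernel-verified Lean document; each statement's English description precedes it below -/
import Mathlib

section
/- For BPE, if two strings s₁ and s₂ both have prefix x₁ⁿ, and in each string the first i (resp. j) tokens of its BPE encoding decode exactly to x₁ⁿ, then those initial token blocks coincide: encode(s₁)₁ⁱ = encode(s₂)₁ʲ = encode(x₁ⁿ). -/
variable {A : Type*} [DecidableEq A]

/-- Apply one BPE merge rule `(l, r) ↦ l ++ r` left-to-right, non-overlapping,
to a list of current tokens (each token represented by its byte string). -/
def mergeOne (l r : List A) : List (List A) → List (List A)
  | [] => []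
  | [a] => [a]
  | a :: b :: rest =>
    if a = l ∧ b = r then (l ++ r) :: mergeOne l r rest
    else a :: mergeOne l r (b :: rest)

/-- BPE encoding: start from single-byte tokens and apply the ordered list of
merge rules. -/
def bpeEncode (rules : List (List A × List A)) (x : List A) : List (List A) :=
  rules.foldl (fun toks lr => mergeOne lr.1 lr.2 toks) (x.map fun a => [a])

/-- BPE decoding: concatenate the byte strings of the tokens. -/
def bpeDecode (t : List (List A)) : List A := t.flatten

def bpeSteps (rules : List (List A × List A)) (toks : List (List A)) : List (List A) :=
  rules.foldl (fun toks lr => mergeOne lr.1 lr.2 toks) toks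

lemma mergeOne_flatten (l r : List A) (toks : List (List A)) :
    (mergeOne l r toks).flatten = toks.flatten := by
  induction toks using mergeOne.induct l r with
  | case1 => simp [mergeOne]
  | case2 a => simp [mergeOne]
  | case3 a b rest h ih =>
    simp [mergeOne, if_pos h, ih, h.1, h.2]
  | case4 a b rest h ih =>
    simp only [mergeOne, if_neg h, List.flatten_cons, ih]

lemma mergeOne_ne_nil (l r : List A) (toks : List (List A))
    (h : ∀ t ∈ toks, t ≠ []) : ∀ t ∈ mergeOne l r toks, t ≠ [] := by
  induction toks using mergeOne.induct l r with
  | case1 => simp [mergeOne]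
  | case2 a => simpa [mergeOne] using h
  | case3 a b rest hc ih =>
    simp only [mergeOne, if_pos hc]
    intro t ht
    rcases List.mem_cons.1 ht with rfl | ht
    · intro hlr
      exact h a (by simp) (by rw [hc.1]; exact (List.append_eq_nil_iff.1 hlr).1)
    · exact ih (fun t ht => h t (by simp [ht])) t ht
  | case4 a b rest hc ih =>
    simp only [mergeOne, if_neg hc]
    intro t ht
    rcases List.mem_cons.1 ht with rfl | ht
    · exact h t (by simp)
    · exact ih (fun t ht => h t (by simpa using Or.inr ht)) t ht

lemma mergeOne_split (l r : List A) (toks : List (List A)) : ∀ i : ℕ, ∃ k,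
    (toks.take k).flatten = ((mergeOne l r toks).take i).flatten ∧
    mergeOne l r (toks.take k) = (mergeOne l r toks).take i ∧
    mergeOne l r (toks.drop k) = (mergeOne l r toks).drop i := by
  induction toks using mergeOne.induct l r with
  | case1 => intro i; exact ⟨0, by simp [mergeOne]⟩
  | case2 a =>
    intro i
    cases i with
    | zero => exact ⟨0, by simp [mergeOne]⟩
    | succ n => exact ⟨1, by simp [mergeOne]⟩
  | case3 a b rest hc ih =>
    intro i
    cases i with
    | zero => exact ⟨0, by simp [mergeOne]⟩
    | succ n =>
      obtain ⟨k, hk1, hk2, hk3⟩ := ih n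
      refine ⟨k + 2, ?_, ?_, ?_⟩
      · simp only [mergeOne, if_pos hc, List.take_succ_cons, List.take, List.flatten_cons, hk1,
          hc.1, hc.2]
        simp
      · simp only [List.take_succ_cons, List.take]
        show mergeOne l r (a :: b :: rest.take k) = _
        simp only [mergeOne, if_pos hc, hk2, List.take_succ_cons]
      · show mergeOne l r (rest.drop k) = _
        simp only [mergeOne, if_pos hc, hk3, List.drop_succ_cons]
  | case4 a b rest hc ih =>
    intro i
    cases i with
    | zero => exact ⟨0, by simp [mergeOne]⟩
    | succ n =>
      obtain ⟨k, hk1, hk2, hk3⟩ := ih n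
      refine ⟨k + 1, ?_, ?_, ?_⟩
      · simp only [mergeOne, if_neg hc, List.take_succ_cons, List.flatten_cons, hk1]
      · simp only [List.take_succ_cons]
        cases k with
        | zero =>
          simp only [List.take_zero] at hk2 ⊢
          simp only [mergeOne] at hk2 ⊢
          simp only [if_neg hc, List.take_succ_cons, ← hk2]
        | succ m =>
          simp only [List.take_succ_cons] at *
          show mergeOne l r (a :: b :: rest.take m) = _
          simp only [mergeOne, if_neg hc, hk2, List.take_succ_cons]
      · simp only [List.drop_succ_cons] at *
        rw [hk3]
        simp only [mergeOne, if_neg hc, List.drop_succ_cons]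

lemma take_flatten_inj (L : List (List A)) (h : ∀ t ∈ L, t ≠ []) :
    ∀ i j, ((L.take i).flatten = (L.take j).flatten) → L.take i = L.take j := by
  induction L with
  | nil => simp
  | cons t L ih =>
    intro i j hij
    cases i with
    | zero =>
      cases j with
      | zero => rfl
      | succ m =>
        exfalso
        simp only [List.take_zero, List.flatten_nil, List.take_succ_cons, List.flatten_cons] at hij
        have := h t (by simp)
        exact this (List.append_eq_nil_iff.1 hij.symm).1
    | succ n =>
      cases j with
      | zero =>
        exfalso
        simp only [List.take_zero, List.flatten_nil, List.take_succ_cons, List.flatten_cons] at hij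
        have := h t (by simp)
        exact this (List.append_eq_nil_iff.1 hij).1
      | succ m =>
        simp only [List.take_succ_cons, List.flatten_cons] at hij ⊢
        have := List.append_cancel_left hij
        rw [ih (fun t ht => h t (by simp [ht])) n m this]

lemma bpeSteps_boundary (rules : List (List A × List A)) :
    ∀ (toks : List (List A)) (i : ℕ), ∃ k,
      (toks.take k).flatten = ((bpeSteps rules toks).take i).flatten := by
  induction rules with
  | nil => intro toks i; exact ⟨i, rfl⟩
  | cons lr rules ih =>
    intro toks i
    obtain ⟨m, hm⟩ := ih (mergeOne lr.1 lr.2 toks) i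
    obtain ⟨k, hk, -, -⟩ := mergeOne_split lr.1 lr.2 toks m
    exact ⟨k, hk.trans hm⟩

lemma bpeSteps_main (rules : List (List A × List A)) :
    ∀ (P S : List (List A)) (i : ℕ), (∀ t ∈ P ++ S, t ≠ []) →
      ((bpeSteps rules (P ++ S)).take i).flatten = P.flatten →
      (bpeSteps rules (P ++ S)).take i = bpeSteps rules P := by
  induction rules with
  | nil =>
    intro P S i hne hflat
    show (P ++ S).take i = P
    have h2 : ((P ++ S).take P.length).flatten = P.flatten := by
      rw [List.take_left]
    have := take_flatten_inj (P ++ S) hne i P.length (hflat.trans h2.symm)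
    rw [this, List.take_left]
  | cons lr rules ih =>
    intro P S i hne hflat
    show (bpeSteps rules (mergeOne lr.1 lr.2 (P ++ S))).take i = bpeSteps rules (mergeOne lr.1 lr.2 P)
    have hflat' : ((bpeSteps rules (mergeOne lr.1 lr.2 (P ++ S))).take i).flatten = P.flatten := hflat
    -- find boundary in mergeOne output
    obtain ⟨m, hm⟩ := bpeSteps_boundary rules (mergeOne lr.1 lr.2 (P ++ S)) i
    rw [hflat'] at hm
    obtain ⟨k, hk1, hk2, hk3⟩ := mergeOne_split lr.1 lr.2 (P ++ S) m
    have hk1' := hk1.trans hm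
    -- take k = P
    have hPk : (P ++ S).take k = P := by
      have h2 : ((P ++ S).take P.length).flatten = P.flatten := by rw [List.take_left]
      have := take_flatten_inj (P ++ S) hne k P.length (hk1'.trans h2.symm)
      rw [this, List.take_left]
    have hSk : (P ++ S).drop k = S := by
      have := (List.take_append_drop k (P ++ S))
      rw [hPk] at this
      exact List.append_cancel_left this
    rw [hPk] at hk2; rw [hSk] at hk3
    have hsplit : mergeOne lr.1 lr.2 (P ++ S) = mergeOne lr.1 lr.2 P ++ mergeOne lr.1 lr.2 S := by
      rw [← List.take_append_drop m (mergeOne lr.1 lr.2 (P ++ S)), hk2, hk3]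
    rw [hsplit]
    apply ih
    · intro t ht
      rcases List.mem_append.1 ht with ht | ht
      · exact mergeOne_ne_nil _ _ P (fun t ht => hne t (by simp [ht])) t ht
      · exact mergeOne_ne_nil _ _ S (fun t ht => hne t (by simp [ht])) t ht
    · rw [mergeOne_flatten]
      rw [hsplit] at hflat'
      exact hflat'

lemma flatten_map_singleton (x : List A) : (x.map fun a => ([a] : List A)).flatten = x := by
  induction x with
  | nil => rfl
  | cons a x ih => simp [ih]

lemma singletons_ne_nil (x : List A) : ∀ t ∈ x.map fun a => ([a] : List A), t ≠ [] := by
  intro t ht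
  obtain ⟨a, -, rfl⟩ := List.mem_map.1 ht
  simp

lemma bpe_prefix_block (rules : List (List A × List A)) (s x : List A)
    (h : x <+: s) (i : ℕ) (hi : bpeDecode ((bpeEncode rules s).take i) = x) :
    (bpeEncode rules s).take i = bpeEncode rules x := by
  obtain ⟨t, rfl⟩ := h
  have e : bpeEncode rules (x ++ t)
      = bpeSteps rules ((x.map fun a => [a]) ++ t.map fun a => [a]) := by
    simp only [bpeEncode, bpeSteps, List.map_append]
  rw [e] at hi ⊢
  have key := bpeSteps_main rules (x.map fun a => [a]) (t.map fun a => [a]) i ?_ ?_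
  · exact key
  · intro u hu
    rcases List.mem_append.1 hu with h' | h'
    · exact singletons_ne_nil x u h'
    · exact singletons_ne_nil t u h'
  · rw [flatten_map_singleton]
    exact hi

/-- For BPE, if two strings `s₁`, `s₂` both have prefix `x`, and in each string
the first `i` (resp. `j`) tokens of its BPE encoding decode exactly to `x`,
then those initial token blocks coincide and equal `encode x`. -/
theorem bpe_prefix_tokens_agree (rules : List (List A × List A))
    (s₁ s₂ x : List A) (h₁ : x <+: s₁) (h₂ : x <+: s₂) (i j : ℕ)
    (hi : bpeDecode ((bpeEncode rules s₁).take i) = x)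
    (hj : bpeDecode ((bpeEncode rules s₂).take j) = x) :
    (bpeEncode rules s₁).take i = (bpeEncode rules s₂).take j ∧
      (bpeEncode rules s₁).take i = bpeEncode rules x := by
  have k₁ := bpe_prefix_block rules s₁ x h₁ i hi
  have k₂ := bpe_prefix_block rules s₂ x h₂ j hj
  exact ⟨k₁.trans k₂.symm, k₁⟩
end

section
/- For the MPE tokenizer, every prefix of a valid encoding is itself a valid encoding: if encode(decode(t₁ᵏ)) = t₁ᵏ then for every j ≤ k, encode(decode(t₁ʲ)) = t₁ʲ. -/
variable {A : Type*} [DecidableEq A]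

def longestTok (voc : List (List A)) (x : List A) : List A :=
  (voc.filter fun v => decide (v <+: x)).foldl
    (fun best v => if best.length < v.length then v else best) []

def mpeEncode (voc : List (List A)) : List A → List (List A)
  | [] => []
  | a :: rest =>
    let t := longestTok voc (a :: rest)
    let t' := if t.length ≤ 1 then [a] else t
    t' :: mpeEncode voc ((a :: rest).drop t'.length)
termination_by x => x.length
decreasing_by
  simp only [t', List.length_drop, List.length_cons]
  split
  · simp
  · omega

def mpeDecode (t : List (List A)) : List A := t.flatten

-- fold lemmas
private lemma fold_mem (l : List (List A)) (init : List A) :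
    l.foldl (fun best v => if best.length < v.length then v else best) init = init ∨
    l.foldl (fun best v => if best.length < v.length then v else best) init ∈ l := by
  induction l generalizing init with
  | nil => simp
  | cons a l ih =>
    simp only [List.foldl_cons]
    rcases ih (if init.length < a.length then a else init) with h | h
    · rw [h]; split <;> simp_all
    · right; simp [h]

private lemma fold_init_le (l : List (List A)) (i : List A) :
    i.length ≤ (l.foldl (fun best v => if best.length < v.length then v else best) i).length := by
  induction l generalizing i with
  | nil => simp
  | cons b l ih2 =>
    simp only [List.foldl_cons]
    refine le_trans ?_ (ih2 _)
    split <;> omega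

private lemma fold_max (l : List (List A)) (init : List A) :
    ∀ v ∈ l, v.length ≤
      (l.foldl (fun best v => if best.length < v.length then v else best) init).length := by
  induction l generalizing init with
  | nil => simp
  | cons a l ih =>
    intro v hv
    simp only [List.foldl_cons]
    rcases List.mem_cons.mp hv with rfl | hv
    · refine le_trans ?_ (fold_init_le l _)
      split <;> omega
    · exact ih _ v hv

lemma longestTok_prefix (voc : List (List A)) (x : List A) :
    longestTok voc x <+: x := by
  rcases fold_mem (voc.filter fun v => decide (v <+: x)) [] with h | h
  · rw [longestTok, h]; exact List.nil_prefix
  · have := List.of_mem_filter h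
    simpa [longestTok] using of_decide_eq_true this

lemma longestTok_mem (voc : List (List A)) (x : List A)
    (hne : longestTok voc x ≠ []) : longestTok voc x ∈ voc := by
  rcases fold_mem (voc.filter fun v => decide (v <+: x)) [] with h | h
  · rw [longestTok] at hne; exact absurd h hne
  · exact List.mem_of_mem_filter h

lemma longestTok_max (voc : List (List A)) (x v : List A)
    (hv : v ∈ voc) (hp : v <+: x) : v.length ≤ (longestTok voc x).length := by
  apply fold_max
  exact List.mem_filter.2 ⟨hv, by simpa⟩

/-- the first emitted token -/
def emitTok (voc : List (List A)) (x : List A) : List A :=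
  let t := longestTok voc x
  if t.length ≤ 1 then x.take 1 else t

lemma mpeEncode_cons (voc : List (List A)) (a : A) (rest : List A) :
    mpeEncode voc (a :: rest) =
      emitTok voc (a :: rest) :: mpeEncode voc ((a :: rest).drop (emitTok voc (a :: rest)).length) := by
  rw [mpeEncode]
  simp only [emitTok]
  split <;> simp_all

lemma emit_eq_of_prefix (voc : List (List A)) (s s' : List A)
    (hp : s <+: s') (hne : s ≠ []) (hes : emitTok voc s' <+: s) :
    emitTok voc s = emitTok voc s' := by
  have hLle : (longestTok voc s).length ≤ (longestTok voc s').length := by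
    by_cases h0 : longestTok voc s = []
    · simp [h0]
    · exact longestTok_max voc s' _ (longestTok_mem voc s h0)
        ((longestTok_prefix voc s).trans hp)
  by_cases hcase : (longestTok voc s').length ≤ 1
  · have h1 : (longestTok voc s).length ≤ 1 := le_trans hLle hcase
    rw [emitTok, emitTok]
    simp only [hcase, h1, if_true]
    -- take 1 s = take 1 s'
    obtain ⟨u, rfl⟩ := hp
    cases s with
    | nil => exact absurd rfl hne
    | cons a l => simp
  · -- long case
    simp only [emitTok] at hes
    rw [if_neg hcase] at hes
    have hmem : longestTok voc s' ∈ voc := by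
      apply longestTok_mem
      intro h; rw [h] at hcase; simp at hcase
    have hge : (longestTok voc s').length ≤ (longestTok voc s).length :=
      longestTok_max voc s _ hmem hes
    have hlen : (longestTok voc s).length = (longestTok voc s').length := le_antisymm hLle hge
    have heq : longestTok voc s = longestTok voc s' := by
      have h1 := (longestTok_prefix voc s).trans hp
      have h2 := (hes.trans hp)
      exact (List.prefix_of_prefix_length_le h1 h2 hLle).eq_of_length hlen
    simp only [emitTok, heq]
    rw [if_neg hcase, if_neg hcase]

lemma emitTok_ne_nil (voc : List (List A)) (a : A) (rest : List A) :
    emitTok voc (a :: rest) ≠ [] := by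
  simp only [emitTok]
  split
  · simp
  · rename_i hlen
    intro h0
    rw [h0] at hlen
    simp at hlen

/-- For the MPE tokenizer (with a vocabulary containing the alphabet), every
prefix of a valid encoding is itself a valid encoding. -/
theorem mpe_prefix_valid (voc : List (List A)) (hvoc : ∀ a : A, [a] ∈ voc)
    (t : List (List A)) (h : mpeEncode voc (mpeDecode t) = t) :
    ∀ j ≤ t.length, mpeEncode voc (mpeDecode (t.take j)) = t.take j := by
  induction t with
  | nil =>
    intro j hj
    simp only [List.length_nil, Nat.le_zero] at hj
    subst hj
    simp [mpeDecode, mpeEncode]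
  | cons t₁ ts ih =>
    intro j hj
    -- unfold h: decode (t₁ :: ts) must be nonempty unless?
    -- first, t₁ nonempty
    have hdec : mpeDecode (t₁ :: ts) = t₁ ++ mpeDecode ts := by simp [mpeDecode]
    -- get structure of h
    have hne : mpeDecode (t₁ :: ts) ≠ [] := by
      intro h0
      rw [h0] at h
      rw [mpeEncode] at h
      exact (List.cons_ne_nil _ _) h.symm
    obtain ⟨a, rest, hs⟩ := List.exists_cons_of_ne_nil hne
    rw [hs, mpeEncode_cons] at h
    have hemit : emitTok voc (a :: rest) = t₁ := (List.cons.injEq _ _ _ _ ▸ h).1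
    have htail : mpeEncode voc ((a :: rest).drop t₁.length) = ts := by
      have := (List.cons.injEq _ _ _ _ ▸ h).2
      rwa [hemit] at this
    have hdrop : (a :: rest).drop t₁.length = mpeDecode ts := by
      rw [← hs, hdec, List.drop_append_of_le_length le_rfl]
      simp
    rw [hdrop] at htail
    cases j with
    | zero => simp [mpeDecode, mpeEncode]
    | succ j =>
      simp only [List.take_succ_cons]
      have hj' : j ≤ ts.length := by simpa using hj
      have ihj := ih htail j hj'
      -- encode (t₁ ++ decode (take j ts)) = t₁ :: take j ts
      have hpre : mpeDecode (t₁ :: ts.take j) <+: mpeDecode (t₁ :: ts) := by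
        simp only [mpeDecode, List.flatten_cons]
        refine (List.prefix_append_right_inj t₁).2 ?_
        exact ⟨(ts.drop j).flatten, by rw [← List.flatten_append, List.take_append_drop]⟩
      have ht₁ne : t₁ ≠ [] := hemit ▸ emitTok_ne_nil voc a rest
      have hsne : mpeDecode (t₁ :: ts.take j) ≠ [] := by
        simp [mpeDecode, ht₁ne]
      obtain ⟨b, brest, hbs⟩ := List.exists_cons_of_ne_nil hsne
      have hemit2 : emitTok voc (b :: brest) = t₁ := by
        rw [← hbs]
        have key := emit_eq_of_prefix voc (mpeDecode (t₁ :: ts.take j)) (mpeDecode (t₁ :: ts))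
          hpre hsne (by rw [hs, hemit]; exact ⟨(ts.take j).flatten, by simp [mpeDecode]⟩)
        rw [key, hs, hemit]
      have hdrop2 : (b :: brest).drop t₁.length = mpeDecode (ts.take j) := by
        rw [← hbs]
        simp only [mpeDecode, List.flatten_cons]
        rw [List.drop_append_of_le_length le_rfl]
        simp
      rw [hbs, mpeEncode_cons, hemit2, hdrop2, ihj]
end
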